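/- If ν > 0, p ∈ ℕ, and p(β) = C_ν (1 + ‖β‖²/ν)^{-(ν+p)/2} is the standard multivariate t-density on ℝ^p with ν degrees of freedom (C_ν = Γ((ν+p)/2)/(Γ(ν/2) ν^{p/2} π^{p/2})), then there exists M > 0 such that for all β = (β_1, …, β_p) ∈ ℝ^p, p(β) ≤ M ∏_{k=1}^p (1 + |β_k|)^{-(1 + ν/p)}. -/

import Mathlib

theorem multivariate_t_density_bound (ν : ℝ) (hν : 0 < ν) (p : ℕ) :
    ∃ M > (0 : ℝ), ∀ β : EuclideanSpace ℝ (Fin p),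
      (Real.Gamma ((ν + p) / 2) /
          (Real.Gamma (ν / 2) * ν ^ ((p : ℝ) / 2) * Real.pi ^ ((p : ℝ) / 2)))
          * (1 + ‖β‖ ^ 2 / ν) ^ (-(ν + p) / 2)
        ≤ M * ∏ k : Fin p, (1 + |β k|) ^ (-(1 + ν / (p : ℝ))) := by
  set C := Real.Gamma ((ν + p) / 2) /
      (Real.Gamma (ν / 2) * ν ^ ((p : ℝ) / 2) * Real.pi ^ ((p : ℝ) / 2)) with hCdef
  have hCpos : 0 < C := by
    apply div_pos (Real.Gamma_pos_of_pos (by positivity))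
    have h1 := Real.Gamma_pos_of_pos (half_pos hν)
    have h2 : (0:ℝ) < ν ^ ((p : ℝ) / 2) := Real.rpow_pos_of_pos hν _
    have h3 : (0:ℝ) < Real.pi ^ ((p : ℝ) / 2) := Real.rpow_pos_of_pos Real.pi_pos _
    positivity
  set c := (2 * max 1 ν) ^ ((ν + p) / 2) with hcdef
  have hbase : (1:ℝ) ≤ 2 * max 1 ν := by
    have := le_max_left (1:ℝ) ν; linarith
  have hc1 : (1:ℝ) ≤ c := Real.one_le_rpow hbase (by positivity)
  have hcpos : (0:ℝ) < c := lt_of_lt_of_le one_pos hc1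
  refine ⟨C * c, by positivity, fun β => ?_⟩
  set x := ‖β‖ with hx
  have hx0 : 0 ≤ x := norm_nonneg β
  set a := 1 + x ^ 2 / ν with ha
  have ha1 : (1:ℝ) ≤ a := by
    rw [ha]
    have : 0 ≤ x ^ 2 / ν := by positivity
    linarith
  have hapos : 0 < a := lt_of_lt_of_le one_pos ha1
  rcases Nat.eq_zero_or_pos p with hp | hp
  · subst hp
    simp only [Finset.univ_eq_empty, Finset.prod_empty, mul_one]
    have h1 : a ^ (-(ν + ((0:ℕ):ℝ)) / 2) ≤ 1 := by
      apply Real.rpow_le_one_of_one_le_of_nonpos ha1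
      push_cast
      linarith
    calc C * a ^ (-(ν + ((0:ℕ):ℝ)) / 2) ≤ C * 1 :=
          mul_le_mul_of_nonneg_left h1 hCpos.le
      _ ≤ C * c := mul_le_mul_of_nonneg_left hc1 hCpos.le
  · have hp0 : (p : ℝ) ≠ 0 := Nat.cast_ne_zero.mpr hp.ne'
    have hppos : (0:ℝ) < p := Nat.cast_pos.mpr hp
    have hk : ∀ k : Fin p, |β k| ≤ x := by
      intro k
      rw [hx, EuclideanSpace.norm_eq]
      have h1 : |β k| = Real.sqrt (‖β k‖ ^ 2) := by
        rw [Real.sqrt_sq_eq_abs]; simp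
      rw [h1]
      apply Real.sqrt_le_sqrt
      exact Finset.single_le_sum (f := fun i => ‖β i‖ ^ 2)
        (fun i _ => by positivity) (Finset.mem_univ k)
    set P := ∏ k : Fin p, (1 + |β k|) with hPdef
    have hP1 : (1:ℝ) ≤ P := by
      rw [hPdef]
      calc (1:ℝ) = ∏ _k : Fin p, (1:ℝ) := by simp
        _ ≤ ∏ k : Fin p, (1 + |β k|) :=
          Finset.prod_le_prod (fun i _ => zero_le_one)
            (fun i _ => by have := abs_nonneg (β i); linarith)
    have hPpos : 0 < P := lt_of_lt_of_le one_pos hP1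
    set t := 1 + ν / (p:ℝ) with ht
    have ht0 : 0 ≤ t := by
      rw [ht]
      have : 0 ≤ ν / (p:ℝ) := by positivity
      linarith
    have hprod : ∏ k : Fin p, (1 + |β k|) ^ (-t) = P ^ (-t) :=
      Real.finset_prod_rpow _ _ (fun k _ => by positivity) _
    have hsq : (1 + x) ^ (2:ℝ) ≤ 2 * max 1 ν * a := by
      rw [Real.rpow_two, ha]
      have hm1 : (1:ℝ) ≤ max 1 ν := le_max_left 1 ν
      have hmν : ν ≤ max 1 ν := le_max_right 1 ν
      have hdiv : x ^ 2 / ν * ν = x ^ 2 := div_mul_cancel₀ _ hν.ne'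
      have hdn : 0 ≤ x ^ 2 / ν := by positivity
      nlinarith [sq_nonneg (1 - x), sq_nonneg x]
    have hPle : P ≤ (1 + x) ^ ((p:ℝ)) := by
      rw [Real.rpow_natCast]
      calc P ≤ ∏ _k : Fin p, (1 + x) := by
            apply Finset.prod_le_prod (fun k _ => by positivity)
            intro k _; linarith [hk k]
        _ = (1 + x) ^ p := by
            rw [Finset.prod_const, Finset.card_univ, Fintype.card_fin]
    have key : P ^ t ≤ c * a ^ ((ν + p) / 2) := by
      have h1 : P ^ t ≤ ((1 + x) ^ ((p:ℝ))) ^ t :=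
        Real.rpow_le_rpow (by linarith) hPle ht0
      have h2 : ((1 + x) ^ ((p:ℝ))) ^ t = (1 + x) ^ (ν + (p:ℝ)) := by
        rw [← Real.rpow_mul (by linarith : (0:ℝ) ≤ 1 + x)]
        congr 1
        rw [ht, mul_add, mul_one, mul_div_assoc', mul_div_cancel_left₀ ν hp0, add_comm]
      have h3 : (1 + x) ^ (ν + (p:ℝ)) = ((1 + x) ^ (2:ℝ)) ^ ((ν + p) / 2) := by
        rw [← Real.rpow_mul (by linarith : (0:ℝ) ≤ 1 + x)]
        congr 1
        ring
      have h4 : ((1 + x) ^ (2:ℝ)) ^ ((ν + p) / 2) ≤ (2 * max 1 ν * a) ^ ((ν + p) / 2) :=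
        Real.rpow_le_rpow (by positivity) hsq (by positivity)
      have h5 : (2 * max 1 ν * a) ^ ((ν + p) / 2) = c * a ^ ((ν + p) / 2) :=
        Real.mul_rpow (by positivity) hapos.le
      calc P ^ t ≤ ((1 + x) ^ ((p:ℝ))) ^ t := h1
        _ = ((1 + x) ^ (2:ℝ)) ^ ((ν + p) / 2) := by rw [h2, h3]
        _ ≤ (2 * max 1 ν * a) ^ ((ν + p) / 2) := h4
        _ = c * a ^ ((ν + p) / 2) := h5
    rw [hprod]
    have hexp : -(ν + (p:ℝ)) / 2 = -((ν + p) / 2) := by ring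
    rw [hexp, Real.rpow_neg hapos.le, Real.rpow_neg hPpos.le]
    have hfin : (a ^ ((ν + p) / 2))⁻¹ ≤ c * (P ^ t)⁻¹ := by
      rw [← div_eq_mul_inv, inv_eq_one_div,
        div_le_div_iff₀ (Real.rpow_pos_of_pos hapos _) (Real.rpow_pos_of_pos hPpos _),
        one_mul]
      exact key
    calc C * (a ^ ((ν + p) / 2))⁻¹ ≤ C * (c * (P ^ t)⁻¹) :=
          mul_le_mul_of_nonneg_left hfin hCpos.le
      _ = C * c * (P ^ t)⁻¹ := by ring
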